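/- Distance bound between the SOSM and an arbitrary stable matching: if the colleges' preference profile w has maximum rank difference h(w) = k, then for any stable matching μ and any college j, both |μ⁻¹(j) \ μ*⁻¹(j, u)| ≤ 4(k ∨ 1) and |μ*⁻¹(j, u) \ μ⁻¹(j)| ≤ 4(k ∨ 1); consequently, for any j ∈ M ∪ {0}, the number of students i with 1{μ(i) = j} ≠ 1{μ*(i, u) = j} is at most 8(k ∨ 1). -/

import Mathlib

attribute [local instance] Classical.propDecidable

noncomputable section

/-- A many-to-one college admissions market (college admissions model) with `n`
students and `m` colleges.  Strict preferences are encoded by injective rank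
functions (a smaller rank means more preferred); `none` is the outside option
`0` (being unmatched / an unfilled position). -/
structure Market (n m : ℕ) where
  quota : Fin m → ℕ
  sRank : Fin n → Option (Fin m) → ℕ
  sRank_inj : ∀ i, Function.Injective (sRank i)
  cRank : Fin m → Option (Fin n) → ℕ
  cRank_inj : ∀ j, Function.Injective (cRank j)

namespace Market

variable {n m : ℕ}

/-- Student `i` strictly prefers `a` to `b`. -/
def sPref (M : Market n m) (i : Fin n) (a b : Option (Fin m)) : Prop :=
  M.sRank i a < M.sRank i b

/-- College `j` strictly prefers `a` to `b`. -/
def cPref (M : Market n m) (j : Fin m) (a b : Option (Fin n)) : Prop :=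
  M.cRank j a < M.cRank j b

/-- The set `μ⁻¹(j)` of students matched to college `j` under `μ`. -/
def assigned (M : Market n m) (μ : Fin n → Option (Fin m)) (j : Fin m) : Finset (Fin n) :=
  Finset.univ.filter fun i => μ i = some j

/-- `μ` is a (capacity-feasible) matching: `|μ⁻¹(j)| ≤ q_j` for every college. -/
def IsMatching (M : Market n m) (μ : Fin n → Option (Fin m)) : Prop :=
  ∀ j, (M.assigned μ j).card ≤ M.quota j

/-- Individual rationality of `μ`. -/
def IndRational (M : Market n m) (μ : Fin n → Option (Fin m)) : Prop :=
  (∀ i, ¬ M.sPref i none (μ i)) ∧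
  (∀ j i', μ i' = some j → ¬ M.cPref j none (some i'))

/-- `(i, j)` is a blocking pair for `μ`. -/
def Blocks (M : Market n m) (μ : Fin n → Option (Fin m)) (i : Fin n) (j : Fin m) : Prop :=
  M.sPref i (some j) (μ i) ∧
  (((M.assigned μ j).card < M.quota j ∧ M.cPref j (some i) none) ∨
   ((M.assigned μ j).card = M.quota j ∧ ∃ i' ∈ M.assigned μ j, M.cPref j (some i) (some i')))

/-- `μ` is stable: individually rational with no blocking pair. -/
def Stable (M : Market n m) (μ : Fin n → Option (Fin m)) : Prop :=
  M.IndRational μ ∧ ∀ i j, ¬ M.Blocks μ i j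

/-- `μ` is envy-free: individually rational and any blocking pair involves an
unmatched student. -/
def EnvyFree (M : Market n m) (μ : Fin n → Option (Fin m)) : Prop :=
  M.IndRational μ ∧ ∀ i j, M.Blocks μ i j → μ i = none

/-- `μ` is 1-envy-free: envy-free, and either stable or there is one and only
one student who belongs to every blocking pair. -/
def OneEnvyFree (M : Market n m) (μ : Fin n → Option (Fin m)) : Prop :=
  M.EnvyFree μ ∧ (M.Stable μ ∨ ∃! i : Fin n, ∀ i' j, M.Blocks μ i' j → i' = i)

/-- `(i, j)` is a student-maximal blocking pair: `j` is `i`'s most preferred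
college among those with whom `i` forms a blocking pair. -/
def StudentMaxBlock (M : Market n m) (μ : Fin n → Option (Fin m)) (i : Fin n) (j : Fin m) :
    Prop :=
  M.Blocks μ i j ∧ ∀ j', M.Blocks μ i j' → M.sRank i (some j) ≤ M.sRank i (some j')

/-- `T` is the re-stabilization operator: on a 1-envy-free matching with no
blocking pair it is the identity; otherwise it satisfies the unique
student-maximal blocking pair `(i, j)`, matching `i` to `j`, keeping everyone
not matched to `j` unchanged, keeping the students of `j` if `j` has a vacancy
or if they are not `j`'s worst current student, and unmatching `j`'s worst
current student otherwise. -/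
def IsTStep (M : Market n m) (T : (Fin n → Option (Fin m)) → Fin n → Option (Fin m)) : Prop :=
  ∀ μ, M.IsMatching μ → M.OneEnvyFree μ →
    ((∀ i j, ¬ M.Blocks μ i j) → T μ = μ) ∧
    ∀ i j, M.StudentMaxBlock μ i j →
      T μ i = some j ∧
      ∀ i', i' ≠ i →
        (μ i' ≠ some j → T μ i' = μ i') ∧
        (μ i' = some j →
          ((M.assigned μ j).card < M.quota j → T μ i' = μ i') ∧
          ((M.assigned μ j).card = M.quota j →
            ((∃ i'' ∈ M.assigned μ j, M.cPref j (some i') (some i'')) → T μ i' = μ i') ∧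
            ((∀ i'' ∈ M.assigned μ j, i'' ≠ i' → M.cPref j (some i'') (some i')) →
              T μ i' = none)))

/-- `Tstar` iterates `T` finitely many times from any 1-envy-free matching
until a fixed point of `T` is reached. -/
def IsTStarOf (M : Market n m) (T Tstar : (Fin n → Option (Fin m)) → Fin n → Option (Fin m)) :
    Prop :=
  ∀ μ, M.IsMatching μ → M.OneEnvyFree μ →
    ∃ r : ℕ, Tstar μ = T^[r] μ ∧ T (Tstar μ) = Tstar μ

/-- A one-step responsive improvement for college `j`: `A` is obtained from `B`
either by filling a vacancy with an acceptable student, or by swapping a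
student of `B` for a strictly preferred outside student. -/
def SwapImproves (M : Market n m) (j : Fin m) (A B : Finset (Fin n)) : Prop :=
  (∃ i₁, i₁ ∉ B ∧ A = insert i₁ B ∧ M.cPref j (some i₁) none) ∨
  (∃ i₁ i₂, i₂ ∈ B ∧ i₁ ∉ B ∧ A = insert i₁ (B.erase i₂) ∧ M.cPref j (some i₁) (some i₂))

/-- The responsive extension of college `j`'s strict preference to sets of
students: the transitive closure of one-step responsive improvements. -/
def SetPref (M : Market n m) (j : Fin m) (A B : Finset (Fin n)) : Prop :=
  Relation.TransGen (M.SwapImproves j) A B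

/-- `μ₁ ≿ μ₂`: every college either gets the same set of students or a
strictly (responsively) preferred set. -/
def CollegesWeakPref (M : Market n m) (μ₁ μ₂ : Fin n → Option (Fin m)) : Prop :=
  ∀ j, M.assigned μ₁ j = M.assigned μ₂ j ∨ M.SetPref j (M.assigned μ₁ j) (M.assigned μ₂ j)

/-- `μ` is the student-optimal stable matching: a stable matching that every
student weakly prefers to any other stable matching. -/
def IsSOSM (M : Market n m) (μ : Fin n → Option (Fin m)) : Prop :=
  M.IsMatching μ ∧ M.Stable μ ∧
    ∀ μ', M.IsMatching μ' → M.Stable μ' → ∀ i, M.sRank i (μ i) ≤ M.sRank i (μ' i)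

/-- `μ` (with student `i` unmatched) is a stable matching of the market in
which student `i` has been removed. -/
def StableAway (M : Market n m) (i : Fin n) (μ : Fin n → Option (Fin m)) : Prop :=
  μ i = none ∧
  (∀ i', i' ≠ i → ¬ M.sPref i' none (μ i')) ∧
  (∀ j i', i' ≠ i → μ i' = some j → ¬ M.cPref j none (some i')) ∧
  (∀ i' j, i' ≠ i → ¬ M.Blocks μ i' j)

/-- `μ` (with student `i` unmatched) is the student-optimal stable matching of
the market in which student `i` has been removed. -/
def IsSOSMAway (M : Market n m) (i : Fin n) (μ : Fin n → Option (Fin m)) : Prop :=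
  M.IsMatching μ ∧ M.StableAway i μ ∧
    ∀ μ', M.IsMatching μ' → M.StableAway i μ' →
      ∀ i', i' ≠ i → M.sRank i' (μ i') ≤ M.sRank i' (μ' i')

/-- The maximum rank difference `h(w)` among the colleges' preferences: the
largest rank gap `|w_j(i₁) − w_j(i₂)|` over colleges `j` and pairs `(i₁, i₂)`
on whose relative ranking at least two colleges disagree (`0` if there is no
disagreement). -/
def maxRankDiff (M : Market n m) : ℕ :=
  Finset.univ.sup fun j : Fin m =>
    (Finset.univ.filter fun q : Option (Fin n) × Option (Fin n) =>
        ∃ j₁ j₂ : Fin m, M.cPref j₁ q.1 q.2 ∧ M.cPref j₂ q.2 q.1).sup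
      fun q => ((M.cRank j q.1 : ℤ) - (M.cRank j q.2 : ℤ)).natAbs

/-- `N*_{j,1}(μ) = μ⁻¹(j) \ μ*⁻¹(j)` : students of `j` under `μ` but not `μs`. -/
def Nset1 (M : Market n m) (μ μs : Fin n → Option (Fin m)) (j : Fin m) : Finset (Fin n) :=
  M.assigned μ j \ M.assigned μs j

/-- `N*_{j,0}(μ) = μ*⁻¹(j) \ μ⁻¹(j)` : students of `j` under `μs` but not `μ`. -/
def Nset0 (M : Market n m) (μ μs : Fin n → Option (Fin m)) (j : Fin m) : Finset (Fin n) :=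
  M.assigned μs j \ M.assigned μ j

/-- The rank `r_{j,i}(A)` of student `i` within the set `A` according to `≻_j`. -/
def rankIn (M : Market n m) (j : Fin m) (i : Fin n) (A : Finset (Fin n)) : ℕ :=
  (A.filter fun i' => M.cPref j (some i') (some i)).card + 1

/-- `a ▷_j b`: student `a` displaces student `b` from college `j` (as we move
from the SOSM `μs` to the stable matching `μ`). -/
def Displaces (M : Market n m) (μ μs : Fin n → Option (Fin m)) (j : Fin m) (a b : Fin n) :
    Prop :=
  a ∈ M.Nset1 μ μs j ∧ b ∈ M.Nset0 μ μs j ∧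
    M.rankIn j a (M.Nset1 μ μs j) = M.rankIn j b (M.Nset0 μ μs j)

/-- `a ▷ b`: `a` displaces `b` from some college. -/
def DisplacesAny (M : Market n m) (μ μs : Fin n → Option (Fin m)) (a b : Fin n) : Prop :=
  ∃ j, M.Displaces μ μs j a b

/-- The positions of the related one-to-one market: college `j` is split into
`q_j` ordered positions. -/
abbrev Position (M : Market n m) : Type := (j : Fin m) × Fin (M.quota j)

/-- Student `i`'s strict preference over positions in the related one-to-one
market: positions of strictly better colleges are better, and within a college
a smaller index is better. -/
def PosBetter (M : Market n m) (i : Fin n) :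
    Option (Position M) → Option (Position M) → Prop
  | some q, some q' =>
      M.sRank i (some q.1) < M.sRank i (some q'.1) ∨ (q.1 = q'.1 ∧ (q.2 : ℕ) < (q'.2 : ℕ))
  | some q, none => M.sRank i (some q.1) < M.sRank i none
  | none, some q' => M.sRank i none < M.sRank i (some q'.1)
  | none, none => False

/-- `(μN, μM)` is the one-to-one matching of the related market corresponding
to the many-to-one matching `μ`: the students of `μ⁻¹(j)` occupy, in the order
of college `j`'s preference, the ordered positions of `j`. -/
def Corresponds (M : Market n m) (μ : Fin n → Option (Fin m))
    (μN : Fin n → Option (Position M)) (μM : Position M → Option (Fin n)) : Prop :=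
  (∀ i p, μN i = some p ↔ μM p = some i) ∧
  (∀ i j, (∃ s, μN i = some ⟨j, s⟩) ↔ μ i = some j) ∧
  (∀ i j (s : Fin (M.quota j)), μN i = some ⟨j, s⟩ →
    (s : ℕ) = ((M.assigned μ j).filter fun i' => M.cPref j (some i') (some i)).card)

/-- `(i, p)` is a blocking pair in the related one-to-one market. -/
def PosBlocks (M : Market n m) (μN : Fin n → Option (Position M))
    (μM : Position M → Option (Fin n)) (i : Fin n) (p : Position M) : Prop :=
  M.PosBetter i (some p) (μN i) ∧ M.cPref p.1 (some i) (μM p)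

/-- Individual rationality in the related one-to-one market. -/
def PosIR (M : Market n m) (μN : Fin n → Option (Position M))
    (μM : Position M → Option (Fin n)) : Prop :=
  (∀ i, ¬ M.PosBetter i none (μN i)) ∧ (∀ p : Position M, ¬ M.cPref p.1 none (μM p))

/-- Stability in the related one-to-one market. -/
def PosStable (M : Market n m) (μN : Fin n → Option (Position M))
    (μM : Position M → Option (Fin n)) : Prop :=
  M.PosIR μN μM ∧ ∀ i p, ¬ M.PosBlocks μN μM i p

/-- Simplicity in the related one-to-one market: individually rational and any
blocking pair involves an unmatched student. -/
def PosSimple (M : Market n m) (μN : Fin n → Option (Position M))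
    (μM : Position M → Option (Fin n)) : Prop :=
  M.PosIR μN μM ∧ ∀ i p, M.PosBlocks μN μM i p → μN i = none

/-- 1-simplicity in the related one-to-one market: simple, and either stable or
there is one and only one student belonging to every blocking pair. -/
def PosOneSimple (M : Market n m) (μN : Fin n → Option (Position M))
    (μM : Position M → Option (Fin n)) : Prop :=
  M.PosSimple μN μM ∧
    (M.PosStable μN μM ∨ ∃! i : Fin n, ∀ i' p, M.PosBlocks μN μM i' p → i' = i)

end Market

/-- A generic one-to-one matching market with `n` students and `p` positions,
with strict preferences encoded by injective rank functions. -/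
structure OOMarket (n p : ℕ) where
  sRank : Fin n → Option (Fin p) → ℕ
  sRank_inj : ∀ i, Function.Injective (sRank i)
  pRank : Fin p → Option (Fin n) → ℕ
  pRank_inj : ∀ c, Function.Injective (pRank c)

namespace OOMarket

variable {n p : ℕ}

/-- `(μN, μM)` is a one-to-one matching. -/
def IsOOMatching (O : OOMarket n p) (μN : Fin n → Option (Fin p))
    (μM : Fin p → Option (Fin n)) : Prop :=
  ∀ i c, μN i = some c ↔ μM c = some i

/-- `(i, c)` is a blocking pair for `(μN, μM)`. -/
def OOBlocks (O : OOMarket n p) (μN : Fin n → Option (Fin p))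
    (μM : Fin p → Option (Fin n)) (i : Fin n) (c : Fin p) : Prop :=
  O.sRank i (some c) < O.sRank i (μN i) ∧ O.pRank c (some i) < O.pRank c (μM c)

/-- Individual rationality. -/
def OOIR (O : OOMarket n p) (μN : Fin n → Option (Fin p))
    (μM : Fin p → Option (Fin n)) : Prop :=
  (∀ i, ¬ O.sRank i none < O.sRank i (μN i)) ∧ (∀ c, ¬ O.pRank c none < O.pRank c (μM c))

/-- Stability. -/
def OOStable (O : OOMarket n p) (μN : Fin n → Option (Fin p))
    (μM : Fin p → Option (Fin n)) : Prop :=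
  O.OOIR μN μM ∧ ∀ i c, ¬ O.OOBlocks μN μM i c

/-- Simplicity: individually rational and every blocking pair involves an
unmatched student. -/
def OOSimple (O : OOMarket n p) (μN : Fin n → Option (Fin p))
    (μM : Fin p → Option (Fin n)) : Prop :=
  O.OOIR μN μM ∧ ∀ i c, O.OOBlocks μN μM i c → μN i = none

/-- 1-simplicity: simple, and either stable or there is one and only one
student belonging to every blocking pair. -/
def OOOneSimple (O : OOMarket n p) (μN : Fin n → Option (Fin p))
    (μM : Fin p → Option (Fin n)) : Prop :=
  O.OOSimple μN μM ∧
    (O.OOStable μN μM ∨ ∃! i : Fin n, ∀ i' c, O.OOBlocks μN μM i' c → i' = i)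

end OOMarket

end

section AuxDistance

open Finset

namespace Market

variable {n m : ℕ}

lemma mem_assigned_iff (M : Market n m) (μ : Fin n → Option (Fin m)) {c : Fin m} {i : Fin n} :
    i ∈ M.assigned μ c ↔ μ i = some c := by
  simp [Market.assigned]

lemma cPref_total (M : Market n m) (j : Fin m) {a b : Option (Fin n)} (h : a ≠ b) :
    M.cPref j a b ∨ M.cPref j b a := by
  have hne : M.cRank j a ≠ M.cRank j b := fun he => h (M.cRank_inj j he)
  rcases lt_or_gt_of_ne hne with h' | h'
  · exact Or.inl h'
  · exact Or.inr h'

variable {M : Market n m} {μ μs : Fin n → Option (Fin m)}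

lemma sosm_rank_le (hμ : M.IsMatching μ) (hst : M.Stable μ) (hs : M.IsSOSM μs) (i : Fin n) :
    M.sRank i (μs i) ≤ M.sRank i (μ i) := hs.2.2 μ hμ hst i

/-- Key stability fact: if `b ∈ Nset0 c` then `c` is full under `μ` and every
student of `c` under `μ` is preferred by `c` to `b`. -/
lemma nset0_spec (hμ : M.IsMatching μ) (hst : M.Stable μ) (hs : M.IsSOSM μs)
    {c : Fin m} {b : Fin n} (hb : b ∈ M.Nset0 μ μs c) :
    (M.assigned μ c).card = M.quota c ∧ ∀ a ∈ M.assigned μ c, M.cPref c (some a) (some b) := by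
  obtain ⟨hbs, hbμ⟩ := Finset.mem_sdiff.mp hb
  have hμsb : μs b = some c := (M.mem_assigned_iff μs).mp hbs
  have hμb : μ b ≠ some c := fun h => hbμ ((M.mem_assigned_iff μ).mpr h)
  have hsp : M.sPref b (some c) (μ b) := by
    have h1 : M.sRank b (μs b) ≤ M.sRank b (μ b) := sosm_rank_le hμ hst hs b
    have h2 : μs b ≠ μ b := fun he => hμb (he ▸ hμsb)
    have h3 : M.sRank b (μs b) ≠ M.sRank b (μ b) := fun he => h2 (M.sRank_inj b he)
    have h4 := lt_of_le_of_ne h1 h3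
    rw [hμsb] at h4
    exact h4
  have hacc : M.cPref c (some b) none := by
    have h1 : ¬ M.cPref c none (some b) := hs.2.1.1.2 c b hμsb
    rcases M.cPref_total c (a := (some b : Option (Fin n))) (b := none) (by simp) with h | h
    · exact h
    · exact absurd h h1
  have hnb := hst.2 b c
  have hcard : (M.assigned μ c).card = M.quota c := by
    rcases lt_or_eq_of_le (hμ c) with h | h
    · exact absurd ⟨hsp, Or.inl ⟨h, hacc⟩⟩ hnb
    · exact h
  refine ⟨hcard, fun a ha => ?_⟩
  have hna : ¬ M.cPref c (some b) (some a) := fun hp => hnb ⟨hsp, Or.inr ⟨hcard, a, ha, hp⟩⟩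
  have hne : (some a : Option (Fin n)) ≠ some b := by
    intro he
    rw [Option.some_inj] at he
    rw [he] at ha
    exact hbμ ha
  rcases M.cPref_total c hne with h | h
  · exact h
  · exact absurd h hna

lemma matched_mono (hμ : M.IsMatching μ) (hst : M.Stable μ) (hs : M.IsSOSM μs)
    {i : Fin n} {c : Fin m} (h : μ i = some c) : μs i ≠ none := by
  intro he
  have h1 : ¬ M.sPref i none (μ i) := hst.1.1 i
  have h2 : M.sRank i (μ i) ≤ M.sRank i none := le_of_not_gt h1
  have h3 : M.sRank i (μ i) ≠ M.sRank i none := by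
    intro heq
    have h5 := M.sRank_inj i heq
    rw [h] at h5
    exact Option.some_ne_none c h5
  have h4 := sosm_rank_le hμ hst hs i
  rw [he] at h4
  exact absurd (lt_of_le_of_ne h2 h3) (not_lt.mpr h4)

lemma matched_card_eq (M : Market n m) (μ : Fin n → Option (Fin m)) :
    (Finset.univ.filter fun i : Fin n => μ i ≠ none).card
      = ∑ c : Fin m, (M.assigned μ c).card := by
  have h : (Finset.univ.filter fun i : Fin n => μ i ≠ none)
      = Finset.univ.biUnion (fun c => M.assigned μ c) := by
    ext i
    constructor
    · intro hi
      have h1 : μ i ≠ none := (Finset.mem_filter.mp hi).2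
      obtain ⟨c, hc⟩ := Option.ne_none_iff_exists'.mp h1
      exact Finset.mem_biUnion.mpr ⟨c, Finset.mem_univ c, (M.mem_assigned_iff μ).mpr hc⟩
    · intro hi
      obtain ⟨c, -, hc⟩ := Finset.mem_biUnion.mp hi
      refine Finset.mem_filter.mpr ⟨Finset.mem_univ i, ?_⟩
      rw [(M.mem_assigned_iff μ).mp hc]
      simp
  rw [h]
  refine Finset.card_biUnion ?_
  intro c _ c' _ hne
  rw [Function.onFun, Finset.disjoint_left]
  intro a ha ha'
  exact hne (Option.some_inj.mp
    (((M.mem_assigned_iff μ).mp ha).symm.trans ((M.mem_assigned_iff μ).mp ha')))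

lemma asg_card_le (hμ : M.IsMatching μ) (hst : M.Stable μ) (hs : M.IsSOSM μs) (c : Fin m) :
    (M.assigned μs c).card ≤ (M.assigned μ c).card := by
  by_cases hN : M.Nset0 μ μs c = ∅
  · exact Finset.card_le_card (by rwa [← Finset.sdiff_eq_empty_iff_subset])
  · obtain ⟨b, hb⟩ := Finset.nonempty_iff_ne_empty.mpr hN
    rw [(nset0_spec hμ hst hs hb).1]
    exact hs.1 c

/-- Rural hospitals theorem: per-college cardinalities coincide and the same
students are unmatched in `μ` and `μs`. -/
lemma prep (hμ : M.IsMatching μ) (hst : M.Stable μ) (hs : M.IsSOSM μs) :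
    (∀ c, (M.assigned μ c).card = (M.assigned μs c).card)
      ∧ (∀ i, μ i = none ↔ μs i = none) := by
  have hpt : ∀ c, (M.assigned μs c).card ≤ (M.assigned μ c).card :=
    fun c => asg_card_le hμ hst hs c
  have hsub : (Finset.univ.filter fun i : Fin n => μ i ≠ none)
      ⊆ (Finset.univ.filter fun i : Fin n => μs i ≠ none) := by
    intro i hi
    have h1 : μ i ≠ none := (Finset.mem_filter.mp hi).2
    obtain ⟨c, hc⟩ := Option.ne_none_iff_exists'.mp h1
    exact Finset.mem_filter.mpr ⟨Finset.mem_univ i, matched_mono hμ hst hs hc⟩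
  have h1 : ∑ c : Fin m, (M.assigned μ c).card ≤ ∑ c : Fin m, (M.assigned μs c).card := by
    rw [← matched_card_eq M μ, ← matched_card_eq M μs]
    exact Finset.card_le_card hsub
  have hc : ∀ c, (M.assigned μ c).card = (M.assigned μs c).card := by
    intro c
    by_contra hne
    have hlt : (M.assigned μs c).card < (M.assigned μ c).card :=
      lt_of_le_of_ne (hpt c) (fun he => hne he.symm)
    have h2 := Finset.sum_lt_sum (fun c (_ : c ∈ Finset.univ) => hpt c)
      ⟨c, Finset.mem_univ c, hlt⟩
    omega
  refine ⟨hc, ?_⟩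
  have hcardeq : (Finset.univ.filter fun i : Fin n => μ i ≠ none).card
      = (Finset.univ.filter fun i : Fin n => μs i ≠ none).card := by
    rw [matched_card_eq M μ, matched_card_eq M μs]
    exact Finset.sum_congr rfl fun c _ => hc c
  have hset := Finset.eq_of_subset_of_card_le hsub (le_of_eq hcardeq.symm)
  intro i
  have h3 := Finset.ext_iff.mp hset i
  simp only [Finset.mem_filter, Finset.mem_univ, true_and] at h3
  exact not_iff_not.mp h3

lemma nset_card_eq (hceq : ∀ c, (M.assigned μ c).card = (M.assigned μs c).card) (c : Fin m) :
    (M.Nset1 μ μs c).card = (M.Nset0 μ μs c).card := by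
  have h1 := Finset.card_inter_add_card_sdiff (M.assigned μ c) (M.assigned μs c)
  have h2 := Finset.card_inter_add_card_sdiff (M.assigned μs c) (M.assigned μ c)
  rw [Finset.inter_comm] at h2
  have h3 := hceq c
  unfold Market.Nset1 Market.Nset0
  omega

lemma changed_mem_nset1 (hnone : ∀ i, μ i = none ↔ μs i = none) {u : Fin n}
    (h : μ u ≠ μs u) : ∃ c, u ∈ M.Nset1 μ μs c := by
  cases hu : μ u with
  | none => exact absurd (hu.trans ((hnone u).mp hu).symm) h
  | some c =>
    refine ⟨c, Finset.mem_sdiff.mpr ⟨(M.mem_assigned_iff μ).mpr hu, fun hmem => ?_⟩⟩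
    exact h (hu.trans ((M.mem_assigned_iff μs).mp hmem).symm)

lemma changed_mem_nset0 (hnone : ∀ i, μ i = none ↔ μs i = none) {u : Fin n}
    (h : μ u ≠ μs u) : ∃ c, u ∈ M.Nset0 μ μs c := by
  cases hu : μs u with
  | none => exact absurd (((hnone u).mpr hu).trans hu.symm) h
  | some c =>
    refine ⟨c, Finset.mem_sdiff.mpr ⟨(M.mem_assigned_iff μs).mpr hu, fun hmem => ?_⟩⟩
    exact h (((M.mem_assigned_iff μ).mp hmem).trans hu.symm)

lemma nset1_college {c c' : Fin m} {u : Fin n} (h : u ∈ M.Nset1 μ μs c)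
    (h' : u ∈ M.Nset1 μ μs c') : c = c' := by
  have h1 : μ u = some c := (M.mem_assigned_iff μ).mp (Finset.mem_sdiff.mp h).1
  have h2 : μ u = some c' := (M.mem_assigned_iff μ).mp (Finset.mem_sdiff.mp h').1
  exact Option.some_inj.mp (h1.symm.trans h2)

/-- A global "displacement partner" function matching, for each college `c`,
the students of `Nset1 c` bijectively with those of `Nset0 c`. -/
lemma exists_partner (M : Market n m) (μ μs : Fin n → Option (Fin m))
    (hcard : ∀ c, (M.Nset1 μ μs c).card = (M.Nset0 μ μs c).card) :
    ∃ F : Fin n → Fin n,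
      (∀ c u, u ∈ M.Nset1 μ μs c → F u ∈ M.Nset0 μ μs c) ∧
      (∀ c c' u u', u ∈ M.Nset1 μ μs c → u' ∈ M.Nset1 μ μs c' → F u = F u' → u = u') ∧
      (∀ c w, w ∈ M.Nset0 μ μs c → ∃ u, u ∈ M.Nset1 μ μs c ∧ F u = w) := by
  classical
  have e : ∀ c : Fin m, {x // x ∈ M.Nset1 μ μs c} ≃ {x // x ∈ M.Nset0 μ μs c} := fun c =>
    Fintype.equivOfCardEq (by rw [Fintype.card_coe, Fintype.card_coe]; exact hcard c)
  have keyinj : ∀ (a b : Fin m) (_ : a = b) (x : {x // x ∈ M.Nset1 μ μs a})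
      (y : {x // x ∈ M.Nset1 μ μs b}),
      ((e a x : Fin n) = (e b y : Fin n)) → (x : Fin n) = (y : Fin n) := by
    intro a b hab
    subst hab
    intro x y hxy
    have := (e a).injective (Subtype.coe_injective hxy)
    rw [this]
  have keyval : ∀ (a b : Fin m) (_ : a = b) (x : {x // x ∈ M.Nset1 μ μs a})
      (y : {x // x ∈ M.Nset1 μ μs b}),
      (x : Fin n) = (y : Fin n) → ((e a x : Fin n) = (e b y : Fin n)) := by
    intro a b hab
    subst hab
    intro x y hxy
    rw [Subtype.coe_injective hxy]
  set F : Fin n → Fin n := fun u => if h : ∃ c, u ∈ M.Nset1 μ μs c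
      then ((e h.choose) ⟨u, h.choose_spec⟩ : Fin n) else u with hFdef
  have hFval : ∀ (u : Fin n) (h : ∃ c, u ∈ M.Nset1 μ μs c),
      F u = ((e h.choose) ⟨u, h.choose_spec⟩ : Fin n) := by
    intro u h
    simp only [hFdef]
    rw [dif_pos h]
  refine ⟨F, ?_, ?_, ?_⟩
  · intro c u hu
    have hex : ∃ c, u ∈ M.Nset1 μ μs c := ⟨c, hu⟩
    rw [hFval u hex]
    have hc : hex.choose = c := nset1_college hex.choose_spec hu
    rw [← hc]
    exact ((e hex.choose) ⟨u, hex.choose_spec⟩).2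
  · intro c c' u u' hu hu' heq
    have hex : ∃ d, u ∈ M.Nset1 μ μs d := ⟨c, hu⟩
    have hex' : ∃ d, u' ∈ M.Nset1 μ μs d := ⟨c', hu'⟩
    rw [hFval u hex, hFval u' hex'] at heq
    have m1 := ((e hex.choose) ⟨u, hex.choose_spec⟩).2
    have m2 := ((e hex'.choose) ⟨u', hex'.choose_spec⟩).2
    have g1 : μs (((e hex.choose) ⟨u, hex.choose_spec⟩ : Fin n)) = some hex.choose :=
      (M.mem_assigned_iff μs).mp (Finset.mem_sdiff.mp m1).1
    have g2 : μs (((e hex'.choose) ⟨u', hex'.choose_spec⟩ : Fin n)) = some hex'.choose :=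
      (M.mem_assigned_iff μs).mp (Finset.mem_sdiff.mp m2).1
    rw [heq] at g1
    have hcc : hex.choose = hex'.choose := Option.some_inj.mp (g1.symm.trans g2)
    exact keyinj hex.choose hex'.choose hcc ⟨u, hex.choose_spec⟩ ⟨u', hex'.choose_spec⟩ heq
  · intro c w hw
    refine ⟨((e c).symm ⟨w, hw⟩ : Fin n), ((e c).symm ⟨w, hw⟩).2, ?_⟩
    have hu : ((e c).symm ⟨w, hw⟩ : Fin n) ∈ M.Nset1 μ μs c := ((e c).symm ⟨w, hw⟩).2
    have hex : ∃ d, ((e c).symm ⟨w, hw⟩ : Fin n) ∈ M.Nset1 μ μs d := ⟨c, hu⟩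
    rw [hFval _ hex]
    have hc : hex.choose = c := nset1_college hex.choose_spec hu
    have h5 : ((e hex.choose) ⟨((e c).symm ⟨w, hw⟩ : Fin n), hex.choose_spec⟩ : Fin n)
        = ((e c) ((e c).symm ⟨w, hw⟩) : Fin n) :=
      keyval hex.choose c hc _ _ rfl
    rw [h5, Equiv.apply_symm_apply]

/-- The central counting argument: `|Nset1 j| ≤ max k 1`. -/
lemma nset1_card_le_max (k : ℕ) (hk : M.maxRankDiff = k)
    (hμ : M.IsMatching μ) (hst : M.Stable μ) (hs : M.IsSOSM μs)
    (hnone : ∀ i, μ i = none ↔ μs i = none)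
    (hN : ∀ c, (M.Nset1 μ μs c).card = (M.Nset0 μ μs c).card)
    (j : Fin m) : (M.Nset1 μ μs j).card ≤ max k 1 := by
  classical
  by_cases hne0 : M.Nset0 μ μs j = ∅
  · rw [hN j, hne0]
    simp
  obtain ⟨F, hF1, hF2, hF3⟩ := exists_partner M μ μs hN
  have hne0' : (M.Nset0 μ μs j).Nonempty := Finset.nonempty_iff_ne_empty.mpr hne0
  set K := max k 1 with hKdef
  have hkK : k ≤ K := le_max_left k 1
  set B := (M.Nset0 μ μs j).image (fun b => M.cRank j (some b)) with hBdef
  have hBne : B.Nonempty := hne0'.image _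
  set β := B.min' hBne with hβdef
  obtain ⟨y₀, hy₀, hy₀β⟩ := Finset.mem_image.mp (Finset.min'_mem B hBne)
  have hβle : ∀ y ∈ M.Nset0 μ μs j, β ≤ M.cRank j (some y) := fun y hy =>
    Finset.min'_le B _ (Finset.mem_image_of_mem _ hy)
  set W := Finset.univ.filter
    (fun i : Fin n => μ i ≠ μs i ∧ M.cRank j (some i) < β) with hWdef
  set S := Finset.univ.filter (fun i : Fin n => μ i ≠ μs i ∧ F i ∈ W) with hSdef
  -- Nset1 j ⊆ W \ S
  have hsub : M.Nset1 μ μs j ⊆ W \ S := by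
    intro x hx
    have hxa : x ∈ M.assigned μ j := (Finset.mem_sdiff.mp hx).1
    have hμx : μ x = some j := (M.mem_assigned_iff μ).mp hxa
    have hch : μ x ≠ μs x := by
      intro he
      exact (Finset.mem_sdiff.mp hx).2 ((M.mem_assigned_iff μs).mpr (he.symm.trans hμx))
    have hφx : M.cRank j (some x) < β := by
      have h6 : M.cPref j (some x) (some y₀) := (nset0_spec hμ hst hs hy₀).2 x hxa
      rw [hβdef, ← hy₀β]
      exact h6
    have hxW : x ∈ W := Finset.mem_filter.mpr ⟨Finset.mem_univ x, hch, hφx⟩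
    have hFx : F x ∈ M.Nset0 μ μs j := hF1 j x hx
    have hFxW : F x ∉ W := by
      intro hmem
      exact absurd (Finset.mem_filter.mp hmem).2.2 (not_lt.mpr (hβle _ hFx))
    exact Finset.mem_sdiff.mpr ⟨hxW, fun hxS => hFxW (Finset.mem_filter.mp hxS).2.2⟩
  -- |S| = |W| via the bijection F
  have hbij : S.card = W.card := by
    apply Finset.card_bij (fun u _ => F u)
    · intro u hu
      exact (Finset.mem_filter.mp hu).2.2
    · intro u hu u' hu' heq
      obtain ⟨c, hc⟩ := changed_mem_nset1 hnone (Finset.mem_filter.mp hu).2.1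
      obtain ⟨c', hc'⟩ := changed_mem_nset1 hnone (Finset.mem_filter.mp hu').2.1
      exact hF2 c c' u u' hc hc' heq
    · intro w hw
      obtain ⟨c, hc⟩ := changed_mem_nset0 hnone (Finset.mem_filter.mp hw).2.1
      obtain ⟨u, hu, hFu⟩ := hF3 c w hc
      have h1 : μ u = some c := (M.mem_assigned_iff μ).mp (Finset.mem_sdiff.mp hu).1
      have hch : μ u ≠ μs u := by
        intro he
        exact (Finset.mem_sdiff.mp hu).2 ((M.mem_assigned_iff μs).mpr (he.symm.trans h1))
      exact ⟨u, Finset.mem_filter.mpr ⟨Finset.mem_univ u, hch, hFu.symm ▸ hw⟩, hFu⟩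
  have hsd : (W \ S).card = (S \ W).card := by
    have i1 := Finset.card_inter_add_card_sdiff W S
    have i2 := Finset.card_inter_add_card_sdiff S W
    rw [Finset.inter_comm] at i2
    omega
  -- every element of S \ W yields a disputed pair landing in a window of size K
  have hwindow : ∀ u ∈ S \ W, M.cRank j (some (F u)) ∈ Finset.Ico (β - K) β := by
    intro u hu
    obtain ⟨huS, huW⟩ := Finset.mem_sdiff.mp hu
    have hch : μ u ≠ μs u := (Finset.mem_filter.mp huS).2.1
    have hFW : F u ∈ W := (Finset.mem_filter.mp huS).2.2
    have hφFu : M.cRank j (some (F u)) < β := (Finset.mem_filter.mp hFW).2.2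
    have hβu : β ≤ M.cRank j (some u) := by
      by_contra hlt
      exact huW (Finset.mem_filter.mpr ⟨Finset.mem_univ u, hch, lt_of_not_ge hlt⟩)
    obtain ⟨c, hc⟩ := changed_mem_nset1 hnone hch
    have hFu0 : F u ∈ M.Nset0 μ μs c := hF1 c u hc
    have hpref : M.cPref c (some u) (some (F u)) :=
      (nset0_spec hμ hst hs hFu0).2 u (Finset.mem_sdiff.mp hc).1
    by_cases hdis : ∃ c₂, M.cPref c₂ (some (F u)) (some u)
    · obtain ⟨c₂, hc₂⟩ := hdis
      have hqmem : ((some u, some (F u)) : Option (Fin n) × Option (Fin n)) ∈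
          Finset.univ.filter (fun q : Option (Fin n) × Option (Fin n) =>
            ∃ j₁ j₂ : Fin m, M.cPref j₁ q.1 q.2 ∧ M.cPref j₂ q.2 q.1) :=
        Finset.mem_filter.mpr ⟨Finset.mem_univ _, c, c₂, hpref, hc₂⟩
      have hle1 : (((M.cRank j (some u) : ℤ) - (M.cRank j (some (F u)) : ℤ)).natAbs)
          ≤ M.maxRankDiff := by
        unfold Market.maxRankDiff
        refine le_trans (Finset.le_sup (f := fun q : Option (Fin n) × Option (Fin n) =>
          ((M.cRank j q.1 : ℤ) - (M.cRank j q.2 : ℤ)).natAbs) hqmem) ?_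
        exact Finset.le_sup (f := fun j' : Fin m =>
          (Finset.univ.filter (fun q : Option (Fin n) × Option (Fin n) =>
            ∃ j₁ j₂ : Fin m, M.cPref j₁ q.1 q.2 ∧ M.cPref j₂ q.2 q.1)).sup
            (fun q => ((M.cRank j' q.1 : ℤ) - (M.cRank j' q.2 : ℤ)).natAbs))
          (Finset.mem_univ j)
      rw [hk] at hle1
      have h4 : M.cRank j (some u) ≤ M.cRank j (some (F u)) + k := by omega
      refine Finset.mem_Ico.mpr ⟨?_, hφFu⟩
      omega
    · push_neg at hdis
      have hnj : ¬ M.cPref j (some (F u)) (some u) := hdis j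
      have hneq : (some (F u) : Option (Fin n)) ≠ some u := by
        intro he
        have h7 : F u = u := Option.some_inj.mp he
        have h8 := Finset.mem_sdiff.mp (h7 ▸ hFu0)
        exact h8.2 (Finset.mem_sdiff.mp hc).1
      have h9 := (M.cPref_total j hneq).resolve_left hnj
      have h10 : M.cRank j (some u) < M.cRank j (some (F u)) := h9
      omega
  have hinjW : Set.InjOn (fun u => M.cRank j (some (F u))) ↑(S \ W) := by
    intro u hu u' hu' heq
    have hch : μ u ≠ μs u :=
      (Finset.mem_filter.mp (Finset.mem_sdiff.mp hu).1).2.1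
    have hch' : μ u' ≠ μs u' :=
      (Finset.mem_filter.mp (Finset.mem_sdiff.mp hu').1).2.1
    obtain ⟨c, hc⟩ := changed_mem_nset1 hnone hch
    obtain ⟨c', hc'⟩ := changed_mem_nset1 hnone hch'
    have hFeq : F u = F u' := Option.some_inj.mp (M.cRank_inj j heq)
    exact hF2 c c' u u' hc hc' hFeq
  have hcount : (S \ W).card ≤ K :=
    calc (S \ W).card ≤ (Finset.Ico (β - K) β).card :=
          Finset.card_le_card_of_injOn _ hwindow hinjW
      _ = β - (β - K) := Nat.card_Ico _ _
      _ ≤ K := by omega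
  calc (M.Nset1 μ μs j).card ≤ (W \ S).card := Finset.card_le_card hsub
    _ = (S \ W).card := hsd
    _ ≤ K := hcount

end Market

end AuxDistance

/-- distance bound between the SOSM `μ*` and an arbitrary stable
matching `μ` when the maximum rank difference is `k`: per-college bounds
`|μ⁻¹(j) \ μ*⁻¹(j)| ≤ 4(k ∨ 1)` and `|μ*⁻¹(j) \ μ⁻¹(j)| ≤ 4(k ∨ 1)`, and for
every `j ∈ M ∪ {0}` the number of students whose membership indicator for `j`
differs is at most `8(k ∨ 1)`. -/
theorem distance_bound_stable_to_sosm {n m : ℕ} (M : Market n m) (k : ℕ)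
    (hk : M.maxRankDiff = k)
    (μ μs : Fin n → Option (Fin m))
    (hμ : M.IsMatching μ) (hst : M.Stable μ) (hs : M.IsSOSM μs) :
    (∀ j : Fin m,
      (M.Nset1 μ μs j).card ≤ 4 * max k 1 ∧
      (M.Nset0 μ μs j).card ≤ 4 * max k 1) ∧
    (∀ j : Option (Fin m),
      (Finset.univ.filter fun i : Fin n => ¬ ((μ i = j) ↔ (μs i = j))).card ≤
        8 * max k 1) := by
  classical
  obtain ⟨hceq, hnone⟩ := Market.prep hμ hst hs
  have hN : ∀ c, (M.Nset1 μ μs c).card = (M.Nset0 μ μs c).card :=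
    fun c => Market.nset_card_eq hceq c
  have hmain : ∀ j : Fin m, (M.Nset1 μ μs j).card ≤ max k 1 :=
    fun j => Market.nset1_card_le_max k hk hμ hst hs hnone hN j
  have hmax4 : max k 1 ≤ 4 * max k 1 := Nat.le_mul_of_pos_left _ (by norm_num)
  have h41 : ∀ j : Fin m, (M.Nset1 μ μs j).card ≤ 4 * max k 1 :=
    fun j => le_trans (hmain j) hmax4
  have h40 : ∀ j : Fin m, (M.Nset0 μ μs j).card ≤ 4 * max k 1 :=
    fun j => le_trans (le_of_eq (hN j).symm) (h41 j)
  refine ⟨fun j => ⟨h41 j, h40 j⟩, ?_⟩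
  intro j
  cases j with
  | none =>
    have hempty : (Finset.univ.filter fun i : Fin n =>
        ¬ ((μ i = none) ↔ (μs i = none))) = ∅ :=
      Finset.filter_eq_empty_iff.mpr (fun {i} _ => not_not_intro (hnone i))
    rw [hempty]
    simp
  | some c =>
    have hsub2 : (Finset.univ.filter fun i : Fin n =>
        ¬ ((μ i = some c) ↔ (μs i = some c))) ⊆ M.Nset1 μ μs c ∪ M.Nset0 μ μs c := by
      intro i hi
      have hp := (Finset.mem_filter.mp hi).2
      by_cases h1 : μ i = some c
      · have h2 : μs i ≠ some c := fun h2 => hp ⟨fun _ => h2, fun _ => h1⟩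
        exact Finset.mem_union_left _ (Finset.mem_sdiff.mpr
          ⟨(M.mem_assigned_iff μ).mpr h1, fun hm => h2 ((M.mem_assigned_iff μs).mp hm)⟩)
      · have h2 : μs i = some c := by
          by_contra h2
          exact hp ⟨fun ha => absurd ha h1, fun hb => absurd hb h2⟩
        exact Finset.mem_union_right _ (Finset.mem_sdiff.mpr
          ⟨(M.mem_assigned_iff μs).mpr h2, fun hm => h1 ((M.mem_assigned_iff μ).mp hm)⟩)
    calc (Finset.univ.filter fun i : Fin n =>
          ¬ ((μ i = some c) ↔ (μs i = some c))).card
        ≤ (M.Nset1 μ μs c ∪ M.Nset0 μ μs c).card := Finset.card_le_card hsub2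
      _ ≤ (M.Nset1 μ μs c).card + (M.Nset0 μ μs c).card := Finset.card_union_le _ _
      _ ≤ 4 * max k 1 + 4 * max k 1 := add_le_add (h41 c) (h40 c)
      _ = 8 * max k 1 := by ring
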